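/- Let M be a module of the Virasoro algebra, h ∈ ℂ, and v ∈ M a vector such that L_0·(L_{−1}·v) = (h − 1)·(L_{−1}·v) and L_0·(L_{−2}·v) = (h − 2)·(L_{−2}·v). Then the vector v₀ := (L_0 − h)·v satisfies L_{−n}·v₀ = 0 for all n ≥ 1 (i.e. v₀ is annihilated by all lowering operators). -/
import Mathlib


/-- A representation of the Virasoro algebra on a complex vector space `V`:
a family of operators `L n` (`n : ℤ`) and an operator `C` satisfying the Virasoro
commutation relations
`[L m, L n] = (n - m) L (m+n) + (C/12)(n³ - n) δ_{m+n,0}` and `[C, L n] = 0`. -/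
structure VirasoroRep (V : Type) [AddCommGroup V] [Module ℂ V] where
  L : ℤ → Module.End ℂ V
  C : Module.End ℂ V
  comm_LL : ∀ m n : ℤ, L m * L n - L n * L m =
      ((n : ℂ) - (m : ℂ)) • L (m + n) +
        (if m + n = 0 then (((n : ℂ) ^ 3 - (n : ℂ)) / 12) else 0) • C
  comm_CL : ∀ n : ℤ, C * L n - L n * C = 0

/-- If `v` is a vector of a Virasoro module such that `L₋₁·v` is an `L₀`-eigenvector of
eigenvalue `h - 1` and `L₋₂·v` is an `L₀`-eigenvector of eigenvalue `h - 2`, then the vector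
`v₀ := (L₀ - h)·v` is annihilated by all lowering operators `L₋ₙ`, `n ≥ 1` (it is singular). -/
theorem virasoro_staggered_nilpotent_part_singular
    (V : Type) [AddCommGroup V] [Module ℂ V] (ρ : VirasoroRep V) (h : ℂ) (v : V)
    (h1 : ρ.L 0 (ρ.L (-1) v) = (h - 1) • ρ.L (-1) v)
    (h2 : ρ.L 0 (ρ.L (-2) v) = (h - 2) • ρ.L (-2) v) :
    ∀ n : ℤ, 1 ≤ n → ρ.L (-n) (ρ.L 0 v - h • v) = 0 := by
  have key : ∀ (m n : ℤ) (x : V), m + n ≠ 0 →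
      ρ.L m (ρ.L n x) = ρ.L n (ρ.L m x) + (((n : ℂ) - m)) • ρ.L (m + n) x := by
    intro m n x hmn
    have := congrArg (fun f : Module.End ℂ V => f x) (ρ.comm_LL m n)
    simp only [LinearMap.sub_apply, Module.End.mul_apply, LinearMap.add_apply,
      LinearMap.smul_apply, if_neg hmn, zero_smul, add_zero] at this
    rw [sub_eq_iff_eq_add] at this
    rw [this]; abel
  have eig : ∀ k : ℕ, ρ.L 0 (ρ.L (-(k + 1 : ℤ)) v) = (h - (k + 1 : ℤ)) • ρ.L (-(k + 1 : ℤ)) v := by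
    intro k
    induction k using Nat.strong_induction_on with
    | _ k ih =>
      match k with
      | 0 => simpa using h1
      | 1 => push_cast; simpa using h2
      | (j + 2) =>
        have hj1 : ρ.L 0 (ρ.L (-((j : ℤ) + 2)) v) = (h - ((j : ℤ) + 2)) • ρ.L (-((j : ℤ) + 2)) v := by
          have := ih (j + 1) (by omega)
          push_cast at this ⊢
          convert this using 3 <;> ring_nf
        set w : V := ρ.L (-((j : ℤ) + 2)) v with hw
        have hbr := key (-1) (-((j : ℤ) + 2)) v (by omega)
        have hco : ((-((j : ℤ) + 2) : ℤ) : ℂ) - ((-1 : ℤ) : ℂ) = -((j : ℂ) + 1) := by push_cast; ring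
        have hsum : (-1 : ℤ) + (-((j : ℤ) + 2)) = -((j : ℤ) + 3) := by ring
        rw [hco, hsum] at hbr
        have ha : ρ.L 0 (ρ.L (-1) w) = (h - ((j : ℂ) + 3)) • ρ.L (-1) w := by
          have hk := key 0 (-1) w (by omega)
          rw [hk, hj1]
          have hc0 : (((-1 : ℤ)) : ℂ) - ((0 : ℤ) : ℂ) = -1 := by push_cast; ring
          rw [hc0]
          simp only [zero_add, map_smul]
          push_cast
          module
        have hb : ρ.L 0 (ρ.L (-((j : ℤ) + 2)) (ρ.L (-1) v))
            = (h - ((j : ℂ) + 3)) • ρ.L (-((j : ℤ) + 2)) (ρ.L (-1) v) := by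
          have hk := key 0 (-((j : ℤ) + 2)) (ρ.L (-1) v) (by omega)
          rw [hk, h1]
          have hc0 : (((-((j : ℤ) + 2)) : ℤ) : ℂ) - ((0 : ℤ) : ℂ) = -((j : ℂ) + 2) := by push_cast; ring
          rw [hc0]
          simp only [zero_add, map_smul]
          push_cast
          module
        have e1 : (-((j : ℂ) + 1)) • ρ.L (-((j : ℤ) + 3)) v
            = ρ.L (-1) w - ρ.L (-((j : ℤ) + 2)) (ρ.L (-1) v) := by
          rw [hbr]; abel
        have hc : (-((j : ℂ) + 1)) • ρ.L 0 (ρ.L (-((j : ℤ) + 3)) v)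
            = (-((j : ℂ) + 1)) • ((h - ((j : ℂ) + 3)) • ρ.L (-((j : ℤ) + 3)) v) := by
          have h3 := congrArg (ρ.L 0) e1
          rw [map_smul, map_sub, ha, hb] at h3
          rw [h3, smul_comm, e1, smul_sub]
        have hne : (-((j : ℂ) + 1)) ≠ 0 := by
          exact neg_ne_zero.mpr (Nat.cast_add_one_ne_zero j)
        have hfin := smul_right_injective V hne hc
        push_cast at hfin ⊢
        convert hfin using 3 <;> push_cast <;> ring_nf
  intro n hn
  lift n to ℕ using (by linarith)
  obtain ⟨k, rfl⟩ : ∃ k : ℕ, n = k + 1 := ⟨n - 1, by omega⟩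
  have hidx : (-((k + 1 : ℕ) : ℤ)) = -((k : ℤ) + 1) := by push_cast; ring
  rw [hidx, map_sub, map_smul, sub_eq_zero]
  have hk := key 0 (-((k : ℤ) + 1)) v (by omega)
  rw [zero_add, eig k] at hk
  linear_combination (norm := match_scalars <;> (push_cast; ring)) -hk
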